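/- The plane cubic curve δ = {[y₀:y₁:y₂] ∈ ℙ²(ℂ) : 2y₀³ + 6y₀²y₁ + 5y₀y₁² + y₀y₁y₂ + 3y₁³ + 5y₁²y₂ + 6y₁y₂² + 2y₂³ = 0} is smooth; that is, for every (y₀,y₁,y₂) ∈ ℂ³ \ {0} at which the defining polynomial f vanishes, the gradient (∂f/∂y₀, ∂f/∂y₁, ∂f/∂y₂) is nonzero. -/
import Mathlib


open MvPolynomial

noncomputable section

/-- The homogeneous cubic
f = 2y₀³ + 6y₀²y₁ + 5y₀y₁² + y₀y₁y₂ + 3y₁³ + 5y₁²y₂ + 6y₁y₂² + 2y₂³,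
the defining polynomial of the discriminant curve δ ⊂ ℙ². -/
def fCubic : MvPolynomial (Fin 3) ℂ :=
  2 * X 0 ^ 3 + 6 * X 0 ^ 2 * X 1 + 5 * X 0 * X 1 ^ 2 + X 0 * X 1 * X 2 +
    3 * X 1 ^ 3 + 5 * X 1 ^ 2 * X 2 + 6 * X 1 * X 2 ^ 2 + 2 * X 2 ^ 3

lemma pd_ofNat (i : Fin 3) (n : ℕ) [n.AtLeastTwo] :
    pderiv i (no_index (OfNat.ofNat n) : MvPolynomial (Fin 3) ℂ) = 0 := by
  rw [← map_ofNat (C : ℂ →+* MvPolynomial (Fin 3) ℂ) n, pderiv_C]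

lemma ev_ofNat (y : Fin 3 → ℂ) (n : ℕ) [n.AtLeastTwo] :
    eval y (no_index (OfNat.ofNat n) : MvPolynomial (Fin 3) ℂ) = OfNat.ofNat n :=
  map_ofNat _ n

lemma ev_natCast (y : Fin 3 → ℂ) (n : ℕ) :
    eval y ((n : MvPolynomial (Fin 3) ℂ)) = n :=
  map_natCast _ n

/-- the plane cubic curve δ = {f = 0} ⊂ ℙ²(ℂ) is smooth: at every nonzero
point of ℂ³ where f vanishes, the gradient (∂f/∂y₀, ∂f/∂y₁, ∂f/∂y₂) is nonzero. -/
theorem stmt14 (y : Fin 3 → ℂ) (hy : y ≠ 0) (hf : eval y fCubic = 0) :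
    ¬ ∀ i : Fin 3, eval y (pderiv i fCubic) = 0 := by
  intro h
  have h0 : 6*y 0^2 + 12*y 0*y 1 + 5*y 1^2 + y 1*y 2 = 0 := by
    have := h 0
    simp only [fCubic, map_add, pderiv_mul, pderiv_pow, pd_ofNat, pderiv_X_self,
      pderiv_X_of_ne (by decide : (1:Fin 3) ≠ 0), pderiv_X_of_ne (by decide : (2:Fin 3) ≠ 0),
      map_mul, map_pow, map_zero, map_one, eval_X, ev_ofNat, ev_natCast] at this
    linear_combination this
  have h1 : 6*y 0^2 + 10*y 0*y 1 + y 0*y 2 + 9*y 1^2 + 10*y 1*y 2 + 6*y 2^2 = 0 := by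
    have := h 1
    simp only [fCubic, map_add, pderiv_mul, pderiv_pow, pd_ofNat, pderiv_X_self,
      pderiv_X_of_ne (by decide : (0:Fin 3) ≠ 1), pderiv_X_of_ne (by decide : (2:Fin 3) ≠ 1),
      map_mul, map_pow, map_zero, map_one, eval_X, ev_ofNat, ev_natCast] at this
    linear_combination this
  have h2 : y 0*y 1 + 5*y 1^2 + 12*y 1*y 2 + 6*y 2^2 = 0 := by
    have := h 2
    simp only [fCubic, map_add, pderiv_mul, pderiv_pow, pd_ofNat, pderiv_X_self,
      pderiv_X_of_ne (by decide : (0:Fin 3) ≠ 2), pderiv_X_of_ne (by decide : (1:Fin 3) ≠ 2),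
      map_mul, map_pow, map_zero, map_one, eval_X, ev_ofNat, ev_natCast] at this
    linear_combination this
  have ha : y 0 = 0 := by
    have h4 : y 0 ^ 4 = 0 := by
      linear_combination (((-2755199/402906 : ℂ))*(y 2)*(y 2) + ((-2737447/201453 : ℂ))*(y 1)*(y 2) + ((-1390691/268604 : ℂ))*(y 1)*(y 1) + ((3398/9593 : ℂ))*(y 0)*(y 2) + ((-991003/2417436 : ℂ))*(y 0)*(y 1) + ((1/6 : ℂ))*(y 0)*(y 0)) * h0 + (((-2228/9593 : ℂ))*(y 1)*(y 2) + ((-46300/86337 : ℂ))*(y 1)*(y 1) + ((-3398/9593 : ℂ))*(y 0)*(y 2) + ((-61757/57558 : ℂ))*(y 0)*(y 1)) * h1 + (((3316655/2417436 : ℂ))*(y 1)*(y 2) + ((1649971/268604 : ℂ))*(y 1)*(y 1) + ((3398/9593 : ℂ))*(y 0)*(y 2) + ((5886935/402906 : ℂ))*(y 0)*(y 1) + ((2778985/402906 : ℂ))*(y 0)*(y 0)) * h2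
    exact pow_eq_zero_iff (by norm_num) |>.mp h4
  have hb : y 1 = 0 := by
    have h4 : y 1 ^ 4 = 0 := by
      linear_combination (((948757/402906 : ℂ))*(y 2)*(y 2) + ((896285/201453 : ℂ))*(y 1)*(y 2) + ((1124983/805812 : ℂ))*(y 1)*(y 1) + ((-1798/9593 : ℂ))*(y 0)*(y 2) + ((97991/2417436 : ℂ))*(y 0)*(y 1)) * h0 + (((3426/9593 : ℂ))*(y 1)*(y 2) + ((130321/172674 : ℂ))*(y 1)*(y 1) + ((1798/9593 : ℂ))*(y 0)*(y 2) + ((3426/9593 : ℂ))*(y 0)*(y 1)) * h1 + (((-1812109/2417436 : ℂ))*(y 1)*(y 2) + ((-2058517/805812 : ℂ))*(y 1)*(y 1) + ((-1798/9593 : ℂ))*(y 0)*(y 2) + ((-1013815/201453 : ℂ))*(y 0)*(y 1) + ((-961343/402906 : ℂ))*(y 0)*(y 0)) * h2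
    exact pow_eq_zero_iff (by norm_num) |>.mp h4
  have hc : y 2 = 0 := by
    have h4 : y 2 ^ 4 = 0 := by
      linear_combination (((-722861/402906 : ℂ))*(y 2)*(y 2) + ((-1116757/402906 : ℂ))*(y 1)*(y 2) + ((-295499/268604 : ℂ))*(y 1)*(y 1) + ((3398/9593 : ℂ))*(y 0)*(y 2) + ((-185191/2417436 : ℂ))*(y 0)*(y 1)) * h0 + (((-61757/57558 : ℂ))*(y 1)*(y 2) + ((-46300/86337 : ℂ))*(y 1)*(y 1) + ((-3398/9593 : ℂ))*(y 0)*(y 2) + ((-2228/9593 : ℂ))*(y 0)*(y 1)) * h1 + (((1/6 : ℂ))*(y 2)*(y 2) + ((2510843/2417436 : ℂ))*(y 1)*(y 2) + ((554779/268604 : ℂ))*(y 1)*(y 1) + ((3398/9593 : ℂ))*(y 0)*(y 2) + ((764399/201453 : ℂ))*(y 0)*(y 1) + ((746647/402906 : ℂ))*(y 0)*(y 0)) * h2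
    exact pow_eq_zero_iff (by norm_num) |>.mp h4
  apply hy
  funext i
  fin_cases i <;> simpa using by assumption
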